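/- Let V be a real vector space of dimension 2n (n ≥ 1). The subgroup of GL(V) generated by the set of all operators ρ_I(θ) = (cos θ)·id + (sin θ)·I, where I ranges over all complex structures on V and θ ranges over ℝ, is exactly SL(V) = {A ∈ GL(V) : det A = 1}. -/

import Mathlib

open Matrix Real

set_option linter.unusedSectionVars false
set_option linter.unreachableTactic false
set_option linter.unusedTactic false
set_option linter.unnecessarySeqFocus false

namespace Stmt3Aux


variable {μ : Type*} [Fintype μ] [DecidableEq μ]

/-- `ρ(M, θ) = cos θ • 1 + sin θ • M` as a matrix. -/
noncomputable def rmat (M : Matrix μ μ ℝ) (θ : ℝ) : Matrix μ μ ℝ :=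
  Real.cos θ • 1 + Real.sin θ • M

theorem rmat_mul {M : Matrix μ μ ℝ} (hM : M * M = -1) (a b : ℝ) :
    rmat M a * rmat M b = rmat M (a + b) := by
  simp only [rmat, add_mul, mul_add, smul_mul_assoc, mul_smul_comm, hM, one_mul, mul_one,
    smul_smul, smul_neg, Real.cos_add, Real.sin_add]
  module

theorem rmat_zero (M : Matrix μ μ ℝ) : rmat M 0 = 1 := by simp [rmat]

theorem rmat_two_pi (M : Matrix μ μ ℝ) : rmat M (2 * π) = 1 := by
  simp [rmat, Real.cos_two_pi, Real.sin_two_pi]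

theorem rmat_pi_div_two (M : Matrix μ μ ℝ) : rmat M (π / 2) = M := by
  simp [rmat]

theorem rmat_neg (M : Matrix μ μ ℝ) (θ : ℝ) : rmat (-M) θ = rmat M (-θ) := by
  simp [rmat]

theorem det_rmat {M : Matrix μ μ ℝ} (hM : M * M = -1) (θ : ℝ) :
    (rmat M θ).det = 1 := by
  set f : ℝ → ℝ := fun θ => (rmat M θ).det with hf
  have hom : ∀ a b, f (a + b) = f a * f b := fun a b => by
    rw [hf]; simp only [← rmat_mul hM a b, det_mul]
  have f0 : f 0 = 1 := by simp [hf, rmat_zero]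
  have fne : ∀ θ, f θ ≠ 0 := by
    intro θ
    have : f θ * f (-θ) = 1 := by rw [← hom]; simp [f0]
    exact left_ne_zero_of_mul_eq_one this
  have fpos : ∀ θ, 0 < f θ := by
    intro θ
    have : f θ = f (θ / 2) * f (θ / 2) := by rw [← hom]; norm_num
    rw [this]
    exact mul_self_pos.2 (fne _)
  have hcont : Continuous f := by
    apply Continuous.matrix_det
    exact (Real.continuous_cos.smul continuous_const).add
      (Real.continuous_sin.smul continuous_const)
  set g : ℝ →+ ℝ :=
    { toFun := fun θ => Real.log (f θ)
      map_zero' := by simp [f0]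
      map_add' := fun a b => by simp only [hom, Real.log_mul (fne a) (fne b)] } with hg
  have gcont : Continuous g := by
    exact Real.continuousOn_log.comp_continuous hcont (fun x => by simp [fne x])
  have key : ∀ θ : ℝ, g θ = θ * g 1 := by
    intro θ
    have h := (g.toRealLinearMap gcont).map_smul θ 1
    simp only [AddMonoidHom.coe_toRealLinearMap] at h
    simpa using h
  have g2pi : g (2 * π) = 0 := by
    have : f (2 * π) = 1 := by simp [hf, rmat_two_pi]
    simp [hg, this]
  have g1 : g (1:ℝ) = 0 := by
    rw [key (2 * π)] at g2pi
    have h2pi : (2:ℝ) * π ≠ 0 := by positivity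
    exact (mul_eq_zero.1 g2pi).resolve_left h2pi
  have : Real.log (f θ) = 0 := by
    have := key θ; rw [g1, mul_zero] at this; exact this
  calc f θ = Real.exp (Real.log (f θ)) := (Real.exp_log (fpos θ)).symm
  _ = 1 := by rw [this, Real.exp_zero]




/-- the standard complex structure on `ℝ²`. -/
def Jmat : Matrix (Fin 2) (Fin 2) ℝ := !![0, -1; 1, 0]

theorem Jmat_mul_Jmat : Jmat * Jmat = -1 := by
  simp [Jmat]
  ext i j
  fin_cases i <;> fin_cases j <;> simp [Jmat]

theorem rmat_J (θ : ℝ) : rmat Jmat θ = !![Real.cos θ, -Real.sin θ; Real.sin θ, Real.cos θ] := by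
  ext i j
  fin_cases i <;> fin_cases j <;> simp [rmat, Jmat, Matrix.one_apply]

/-- a traceless `2×2` matrix of determinant one squares to `-1`. -/
theorem sq_eq_neg_one {C : Matrix (Fin 2) (Fin 2) ℝ} (h1 : C.det = 1)
    (h2 : C 0 0 + C 1 1 = 0) : C * C = -1 := by
  rw [Matrix.det_fin_two] at h1
  ext i j
  rw [Matrix.mul_apply]
  fin_cases i <;> fin_cases j <;> simp [Fin.sum_univ_two]
  · linear_combination -h1 + C 0 0 * h2
  · linear_combination C 0 1 * h2
  · linear_combination C 1 0 * h2
  · linear_combination -h1 + C 1 1 * h2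

theorem exists_cos_sin {x y : ℝ} (h : x ^ 2 + y ^ 2 = 1) :
    ∃ θ : ℝ, Real.cos θ = x ∧ Real.sin θ = y := by
  have hx1 : x ^ 2 ≤ 1 := by nlinarith [sq_nonneg y]
  have hx : -1 ≤ x ∧ x ≤ 1 := abs_le.1 (by nlinarith [sq_abs x, abs_nonneg x])
  rcases le_or_gt 0 y with hy | hy
  · refine ⟨Real.arccos x, Real.cos_arccos hx.1 hx.2, ?_⟩
    rw [Real.sin_arccos]
    rw [show (1 : ℝ) - x ^ 2 = y ^ 2 by linarith]
    exact (Real.sqrt_sq hy)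
  · refine ⟨-Real.arccos x, by rw [Real.cos_neg]; exact Real.cos_arccos hx.1 hx.2, ?_⟩
    rw [Real.sin_neg, Real.sin_arccos]
    rw [show (1 : ℝ) - x ^ 2 = y ^ 2 by linarith]
    rw [show y ^ 2 = (-y) ^ 2 by ring, Real.sqrt_sq (by linarith)]
    ring

/-- every `2×2` matrix of determinant `1` is a rotation matrix times a complex structure. -/
theorem sl2_decomp (A : Matrix (Fin 2) (Fin 2) ℝ) (hA : A.det = 1) :
    ∃ (θ : ℝ) (C : Matrix (Fin 2) (Fin 2) ℝ), C * C = -1 ∧ A = rmat Jmat θ * C := by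
  have hdet : A 0 0 * A 1 1 - A 0 1 * A 1 0 = 1 := by
    rw [← Matrix.det_fin_two]; exact hA
  set a := A 0 0; set b := A 0 1; set c := A 1 0; set d := A 1 1
  set R : ℝ := Real.sqrt ((a + d) ^ 2 + (c - b) ^ 2) with hR
  have hR2 : R ^ 2 = (a + d) ^ 2 + (c - b) ^ 2 := Real.sq_sqrt (by positivity)
  have hsum : (a + d) ^ 2 + (c - b) ^ 2 ≠ 0 := by
    intro h0
    have h1 : a + d = 0 := by nlinarith [sq_nonneg (a + d), sq_nonneg (c - b)]
    have h2 : c - b = 0 := by nlinarith [sq_nonneg (a + d), sq_nonneg (c - b)]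
    have key : -(d * d) - b * b = 1 := by linear_combination hdet - d * h1 + b * h2
    nlinarith [key, sq_nonneg d, sq_nonneg b, mul_self_nonneg d, mul_self_nonneg b]
  have hRpos : 0 < R := Real.sqrt_pos.2 (lt_of_le_of_ne (by positivity) (Ne.symm hsum))
  obtain ⟨θ, hcos, hsin⟩ := exists_cos_sin (x := (c - b) / R) (y := -(a + d) / R)
    (by field_simp; nlinarith [hR2])
  refine ⟨θ, rmat Jmat (-θ) * A, ?_, ?_⟩
  · apply sq_eq_neg_one
    · have : (rmat Jmat (-θ)).det = 1 := by
        rw [rmat_J, Matrix.det_fin_two_of]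
        nlinarith [Real.sin_sq_add_cos_sq (-θ)]
      rw [Matrix.det_mul, this, one_mul, hA]
    · have e1 : (rmat Jmat (-θ) * A) 0 0 = Real.cos θ * a + Real.sin θ * c := by
        rw [rmat_J, Matrix.mul_apply, Fin.sum_univ_two]
        simp [Real.cos_neg, Real.sin_neg]
        try ring
      have e2 : (rmat Jmat (-θ) * A) 1 1 = -Real.sin θ * b + Real.cos θ * d := by
        rw [rmat_J, Matrix.mul_apply, Fin.sum_univ_two]
        simp [Real.cos_neg, Real.sin_neg]
        try ring
      rw [e1, e2, hcos, hsin]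
      field_simp
      ring
  · have : rmat Jmat θ * rmat Jmat (-θ) = 1 := by
      have h := Jmat_mul_Jmat
      have := by
        calc rmat Jmat θ * rmat Jmat (-θ) = rmat Jmat (θ + -θ) := by
              simp only [rmat, add_mul, mul_add, smul_mul_assoc, mul_smul_comm, h, one_mul,
                mul_one, smul_smul, smul_neg, Real.cos_add, Real.sin_add]
              module
        _ = 1 := by simp [rmat]
      exact this
    rw [← Matrix.mul_assoc, this, Matrix.one_mul]




variable {n : ℕ} [NeZero n]

theorem blockDiagonal_rmat (u : Fin n → Matrix (Fin 2) (Fin 2) ℝ) (θ : ℝ) :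
    blockDiagonal (fun k => rmat (u k) θ) = rmat (blockDiagonal u) θ := by
  simp only [rmat]
  have : (fun k => Real.cos θ • (1 : Matrix (Fin 2) (Fin 2) ℝ) + Real.sin θ • u k) =
      (Real.cos θ • (1 : Fin n → Matrix (Fin 2) (Fin 2) ℝ) + Real.sin θ • u) := rfl
  rw [this, blockDiagonal_add, blockDiagonal_smul, blockDiagonal_smul, blockDiagonal_one]

theorem blockDiagonal_cs {u : Fin n → Matrix (Fin 2) (Fin 2) ℝ} (hu : ∀ k, u k * u k = -1) :
    blockDiagonal u * blockDiagonal u = -1 := by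
  rw [← blockDiagonal_mul]
  have : (fun k => u k * u k) = (-(1 : Fin n → Matrix (Fin 2) (Fin 2) ℝ)) := by
    funext k; rw [hu k]; rfl
  rw [this, blockDiagonal_neg, blockDiagonal_one]

/-- single SL2 block at block `0`. -/
noncomputable def sblock (n : ℕ) [NeZero n] (A : Matrix (Fin 2) (Fin 2) ℝ) :
    Matrix (Fin 2 × Fin n) (Fin 2 × Fin n) ℝ :=
  blockDiagonal (fun k => if k = 0 then A else 1)

theorem sblock_transvection (cc : ℝ) :
    sblock n !![1, cc; 0, 1] = transvection ((0, 0) : Fin 2 × Fin n) (1, 0) cc := by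
  ext ⟨a1, a2⟩ ⟨b1, b2⟩
  simp only [sblock, blockDiagonal_apply, transvection, Matrix.add_apply, Matrix.single,
    Matrix.one_apply, Prod.mk.injEq, Matrix.of_apply]
  by_cases h2 : a2 = b2
  · subst h2
    by_cases h0 : a2 = 0
    · subst h0
      fin_cases a1 <;> fin_cases b1 <;> simp
    · fin_cases a1 <;> fin_cases b1 <;> simp [h0, Ne.symm h0] <;> tauto
  · fin_cases a1 <;> fin_cases b1 <;> simp [h2] <;>
      first
      | tauto
      | (split_ifs with h
         · exact absurd (h.1.symm.trans h.2) h2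
         · rfl)
      | (intro h h'; exact absurd (h.symm.trans h') h2)

theorem sblock_elemdiag (a : ℝ) :
    sblock n !![a, 0; 0, a⁻¹] =
      diagonal (fun p : Fin 2 × Fin n =>
        if p = (0, 0) then a else if p = (1, 0) then a⁻¹ else 1) := by
  ext ⟨a1, a2⟩ ⟨b1, b2⟩
  simp only [sblock, blockDiagonal_apply, diagonal, Matrix.of_apply, Prod.mk.injEq]
  by_cases h2 : a2 = b2
  · subst h2
    by_cases h0 : a2 = 0
    · subst h0
      fin_cases a1 <;> fin_cases b1 <;> simp
    · fin_cases a1 <;> fin_cases b1 <;> simp [h0, Matrix.one_apply, Prod.ext_iff] <;> tauto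
  · fin_cases a1 <;> fin_cases b1 <;> simp [h2, Prod.ext_iff] <;> tauto

theorem stdBasisMatrix_submatrix {ι : Type*} [DecidableEq ι] (e : ι ≃ ι) (p q : ι) (cc : ℝ) :
    (Matrix.single p q cc).submatrix ⇑e ⇑e = Matrix.single (e.symm p) (e.symm q) cc := by
  ext a b
  simp [Matrix.single, Equiv.symm_apply_eq]

theorem transvection_submatrix {ι : Type*} [DecidableEq ι] (e : ι ≃ ι) (p q : ι) (cc : ℝ) :
    (transvection p q cc).submatrix ⇑e ⇑e = transvection (e.symm p) (e.symm q) cc := by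
  have h1 := stdBasisMatrix_submatrix e p q cc
  ext a b
  simp only [transvection, Matrix.submatrix_apply, Matrix.add_apply]
  rw [show Matrix.single p q cc (e a) (e b) =
    (Matrix.single p q cc).submatrix ⇑e ⇑e a b from rfl, h1]
  congr 1
  simp [Matrix.one_apply, e.injective.eq_iff]

theorem diagonal_submatrix {ι : Type*} [Fintype ι] [DecidableEq ι] (e : ι ≃ ι) (D : ι → ℝ) :
    (diagonal D).submatrix ⇑e ⇑e = diagonal (D ∘ e) := by
  ext a b
  simp [Matrix.diagonal, Matrix.submatrix_apply, e.injective.eq_iff]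

theorem exists_perm {ι : Type*} [DecidableEq ι] {p q i j : ι} (hpq : p ≠ q) (hij : i ≠ j) :
    ∃ σ : Equiv.Perm ι, σ p = i ∧ σ q = j := by
  set τ₁ := Equiv.swap p i
  have h1 : τ₁ p = i := Equiv.swap_apply_left p i
  set q' := τ₁ q with hq'
  have hiq' : i ≠ q' := by
    rw [← h1, hq']; exact fun h => hpq (τ₁.injective h)
  refine ⟨τ₁.trans (Equiv.swap q' j), ?_, ?_⟩
  · simp only [Equiv.trans_apply, h1]
    exact Equiv.swap_apply_of_ne_of_ne hiq' hij
  · simp only [Equiv.trans_apply, ← hq']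
    exact Equiv.swap_apply_left q' j



variable {V : Type*} [AddCommGroup V] [Module ℝ V]

/-- the generating set. -/
def genSet (V : Type*) [AddCommGroup V] [Module ℝ V] : Set (V ≃ₗ[ℝ] V) :=
  {A : V ≃ₗ[ℝ] V | ∃ (I : Module.End ℝ V) (θ : ℝ),
    I ∘ₗ I = -LinearMap.id ∧
    (A : V →ₗ[ℝ] V) = Real.cos θ • LinearMap.id + Real.sin θ • I}

theorem end_rho_mul {I : Module.End ℝ V} (hI : I ∘ₗ I = -LinearMap.id) (a b : ℝ) :
    (Real.cos a • LinearMap.id + Real.sin a • I) ∘ₗ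
      (Real.cos b • LinearMap.id + Real.sin b • I) =
    (Real.cos (a + b) • LinearMap.id + Real.sin (a + b) • I) := by
  simp only [LinearMap.add_comp, LinearMap.comp_add, LinearMap.smul_comp, LinearMap.comp_smul,
    LinearMap.id_comp, LinearMap.comp_id, hI, Real.cos_add, Real.sin_add, smul_neg, smul_smul]
  module

theorem mem_closure_rho (I : Module.End ℝ V) (hI : I ∘ₗ I = -LinearMap.id) (θ : ℝ) :
    ∃ E ∈ Subgroup.closure (genSet V),
      (E : V →ₗ[ℝ] V) = Real.cos θ • LinearMap.id + Real.sin θ • I := by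
  have h1 : (Real.cos θ • LinearMap.id + Real.sin θ • I) ∘ₗ
      (Real.cos (-θ) • LinearMap.id + Real.sin (-θ) • I) = LinearMap.id := by
    rw [end_rho_mul hI]; simp
  have h2 : (Real.cos (-θ) • LinearMap.id + Real.sin (-θ) • I) ∘ₗ
      (Real.cos θ • LinearMap.id + Real.sin θ • I) = LinearMap.id := by
    rw [end_rho_mul hI]; simp
  refine ⟨LinearEquiv.ofLinear _ _ h1 h2, ?_, rfl⟩
  exact Subgroup.subset_closure ⟨I, θ, hI, rfl⟩

theorem conj_mem_closure (g : V ≃ₗ[ℝ] V) {E : V ≃ₗ[ℝ] V}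
    (hE : E ∈ Subgroup.closure (genSet V)) :
    g * E * g⁻¹ ∈ Subgroup.closure (genSet V) := by
  induction hE using Subgroup.closure_induction with
  | mem x hx =>
      obtain ⟨I, θ, hI, hx⟩ := hx
      apply Subgroup.subset_closure
      refine ⟨(g : V →ₗ[ℝ] V) ∘ₗ I ∘ₗ (g.symm : V →ₗ[ℝ] V), θ, ?_, ?_⟩
      · have hgg : (g.symm : V →ₗ[ℝ] V) ∘ₗ (g : V →ₗ[ℝ] V) = LinearMap.id := by
          ext v; simp
        calc ((g : V →ₗ[ℝ] V) ∘ₗ I ∘ₗ (g.symm : V →ₗ[ℝ] V)) ∘ₗ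
              ((g : V →ₗ[ℝ] V) ∘ₗ I ∘ₗ (g.symm : V →ₗ[ℝ] V))
            = (g : V →ₗ[ℝ] V) ∘ₗ I ∘ₗ ((g.symm : V →ₗ[ℝ] V) ∘ₗ (g : V →ₗ[ℝ] V)) ∘ₗ I ∘ₗ
              (g.symm : V →ₗ[ℝ] V) := by
              simp only [LinearMap.comp_assoc]
          _ = (g : V →ₗ[ℝ] V) ∘ₗ (I ∘ₗ I) ∘ₗ (g.symm : V →ₗ[ℝ] V) := by
              rw [hgg]; simp only [LinearMap.id_comp, LinearMap.comp_assoc]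
          _ = -LinearMap.id := by
              rw [hI]; ext v; simp
      · ext v
        have hxv : ∀ w, x w = Real.cos θ • w + Real.sin θ • I w := by
          intro w
          have := congrArg (fun f => f w) hx
          simpa using this
        simp only [LinearEquiv.coe_coe, LinearMap.coe_comp, Function.comp_apply,
          LinearMap.add_apply, LinearMap.smul_apply, LinearMap.id_apply]
        show g (x (g⁻¹ v)) = _
        rw [hxv]
        have hginv : ∀ w, g⁻¹ w = g.symm w := fun _ => rfl
        simp [LinearEquiv.map_add, LinearEquiv.map_smul, hginv, g.apply_symm_apply]
  | one => simpa using Subgroup.one_mem _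
  | mul x y hx hy hx' hy' =>
      have : g * (x * y) * g⁻¹ = (g * x * g⁻¹) * (g * y * g⁻¹) := by group
      rw [this]; exact Subgroup.mul_mem _ hx' hy'
  | inv x hx hx' =>
      have : g * x⁻¹ * g⁻¹ = (g * x * g⁻¹)⁻¹ := by group
      rw [this]; exact Subgroup.inv_mem _ hx'


theorem toLin_reindex {V : Type*} [AddCommGroup V] [Module ℝ V] {ι : Type*} [Fintype ι]
    [DecidableEq ι] (c : Module.Basis ι ℝ V) (e : ι ≃ ι) (N : Matrix ι ι ℝ) :
    Matrix.toLin (c.reindex e) (c.reindex e) N = Matrix.toLin c c (N.submatrix ⇑e ⇑e) := by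
  refine c.ext fun j => ?_
  have L : (Matrix.toLin (c.reindex e) (c.reindex e) N) (c j) = ∑ i, N i (e j) • c (e.symm i) := by
    conv_lhs => rw [show c j = (c.reindex e) (e j) by simp]
    rw [Matrix.toLin_self]
    simp [Module.Basis.reindex_apply]
  have R : (Matrix.toLin c c (N.submatrix ⇑e ⇑e)) (c j) = ∑ i, N (e i) (e j) • c i := by
    rw [Matrix.toLin_self]
    simp [Matrix.submatrix_apply]
  rw [L, R, ← Equiv.sum_comp e (fun i => N i (e j) • c (e.symm i))]
  simp

section Main

variable {V : Type*} [AddCommGroup V] [Module ℝ V] {n : ℕ} [NeZero n]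

/-- membership predicate: the matrix `N` (w.r.t. basis `c`) is realized by an element of the
closure of the generating set. -/
def QQ (c : Module.Basis (Fin 2 × Fin n) ℝ V) (N : Matrix (Fin 2 × Fin n) (Fin 2 × Fin n) ℝ) : Prop :=
  ∃ E ∈ Subgroup.closure (genSet V), (E : V →ₗ[ℝ] V) = Matrix.toLin c c N

theorem q_mul {c : Module.Basis (Fin 2 × Fin n) ℝ V} {M N : Matrix (Fin 2 × Fin n) (Fin 2 × Fin n) ℝ}
    (hM : QQ c M) (hN : QQ c N) : QQ c (M * N) := by
  obtain ⟨E1, hE1, h1⟩ := hM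
  obtain ⟨E2, hE2, h2⟩ := hN
  refine ⟨E1 * E2, Subgroup.mul_mem _ hE1 hE2, ?_⟩
  rw [Matrix.toLin_mul c c c]
  show (E1 : V →ₗ[ℝ] V) ∘ₗ (E2 : V →ₗ[ℝ] V) = _
  rw [h1, h2]

theorem q_rmat (c : Module.Basis (Fin 2 × Fin n) ℝ V)
    {M : Matrix (Fin 2 × Fin n) (Fin 2 × Fin n) ℝ} (hM : M * M = -1) (θ : ℝ) :
    QQ c (rmat M θ) := by
  have hI : (Matrix.toLin c c M) ∘ₗ (Matrix.toLin c c M) = -LinearMap.id := by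
    rw [show (Matrix.toLin c c M) ∘ₗ (Matrix.toLin c c M) = Matrix.toLin c c (M * M) from
      (Matrix.toLin_mul c c c M M).symm, hM, map_neg, Matrix.toLin_one]
  obtain ⟨E, hE, hEeq⟩ := mem_closure_rho (Matrix.toLin c c M) hI θ
  refine ⟨E, hE, ?_⟩
  rw [hEeq, rmat, map_add]
  simp [Matrix.toLin_one]

theorem q_core (c : Module.Basis (Fin 2 × Fin n) ℝ V) (A : Matrix (Fin 2) (Fin 2) ℝ)
    (hA : A.det = 1) : QQ c (sblock n A) := by
  obtain ⟨θ, C, hC, hAeq⟩ := sl2_decomp A hA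
  set ψ : ℝ := -(θ + π / 2) / 2 with hψ
  have hu₁c : ∀ k : Fin n, (fun _ : Fin n => Jmat) k * (fun _ : Fin n => Jmat) k = -1 :=
    fun _ => Jmat_mul_Jmat
  have hu₂c : ∀ k : Fin n, (fun k : Fin n => if k = 0 then C else Jmat) k *
      (fun k : Fin n => if k = 0 then C else Jmat) k = -1 := fun k => by
    by_cases h : k = 0 <;> simp [h, hC, Jmat_mul_Jmat]
  have hu₄c : ∀ k : Fin n, (fun k : Fin n => if k = 0 then -Jmat else Jmat) k *
      (fun k : Fin n => if k = 0 then -Jmat else Jmat) k = -1 := fun k => by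
    by_cases h : k = 0 <;> simp [h, Jmat_mul_Jmat]
  have Q1 := q_rmat c (blockDiagonal_cs hu₁c) θ
  have Q2 := q_rmat c (blockDiagonal_cs hu₂c) (π / 2)
  have Q3 := q_rmat c (blockDiagonal_cs hu₁c) ψ
  have Q4 := q_rmat c (blockDiagonal_cs hu₄c) ψ
  have Qprod := q_mul (q_mul Q1 Q2) (q_mul Q3 Q4)
  have harg : ∀ k : Fin n,
      rmat ((fun _ : Fin n => Jmat) k) θ *
        rmat ((fun k : Fin n => if k = 0 then C else Jmat) k) (π / 2) *
        (rmat ((fun _ : Fin n => Jmat) k) ψ *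
          rmat ((fun k : Fin n => if k = 0 then -Jmat else Jmat) k) ψ) =
      (fun k : Fin n => if k = 0 then A else 1) k := by
    intro k
    by_cases h : k = 0
    · subst h
      simp only [eq_self_iff_true, if_true]
      rw [rmat_pi_div_two, rmat_neg, rmat_mul Jmat_mul_Jmat,
        show ψ + -ψ = 0 by ring, rmat_zero, Matrix.mul_one, hAeq]
    · simp only [if_neg h]
      rw [rmat_mul Jmat_mul_Jmat, rmat_mul Jmat_mul_Jmat, rmat_mul Jmat_mul_Jmat,
        show θ + π / 2 + (ψ + ψ) = 0 by rw [hψ]; ring, rmat_zero]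
  have hmat : rmat (blockDiagonal fun _ : Fin n => Jmat) θ *
      rmat (blockDiagonal fun k : Fin n => if k = 0 then C else Jmat) (π / 2) *
      (rmat (blockDiagonal fun _ : Fin n => Jmat) ψ *
        rmat (blockDiagonal fun k : Fin n => if k = 0 then -Jmat else Jmat) ψ) = sblock n A := by
    rw [← blockDiagonal_rmat, ← blockDiagonal_rmat, ← blockDiagonal_rmat, ← blockDiagonal_rmat,
      ← blockDiagonal_mul, ← blockDiagonal_mul, ← blockDiagonal_mul]
    exact congrArg blockDiagonal (funext harg)
  rw [hmat] at Qprod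
  exact Qprod

theorem q_transvection (c : Module.Basis (Fin 2 × Fin n) ℝ V) (i j : Fin 2 × Fin n) (hij : i ≠ j)
    (cc : ℝ) : QQ c (transvection i j cc) := by
  obtain ⟨σ, hp, hq⟩ := exists_perm (p := ((0, 0) : Fin 2 × Fin n)) (q := (1, 0)) (i := i) (j := j)
    (by simp [Prod.ext_iff]) hij
  have hcore := q_core (c.reindex σ.symm) !![1, cc; 0, 1] (by simp [Matrix.det_fin_two_of])
  obtain ⟨E, hE, hEeq⟩ := hcore
  refine ⟨E, hE, ?_⟩
  rw [hEeq, toLin_reindex, sblock_transvection, transvection_submatrix, Equiv.symm_symm, hp, hq]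

theorem q_elemdiag (c : Module.Basis (Fin 2 × Fin n) ℝ V) (i j : Fin 2 × Fin n) (hij : i ≠ j)
    (a : ℝ) (ha : a ≠ 0) :
    QQ c (diagonal fun x => if x = i then a else if x = j then a⁻¹ else 1) := by
  obtain ⟨σ, hp, hq⟩ := exists_perm (p := ((0, 0) : Fin 2 × Fin n)) (q := (1, 0)) (i := i) (j := j)
    (by simp [Prod.ext_iff]) hij
  have hcore := q_core (c.reindex σ.symm) !![a, 0; 0, a⁻¹]
    (by simp [Matrix.det_fin_two_of, mul_inv_cancel₀ ha])
  obtain ⟨E, hE, hEeq⟩ := hcore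
  refine ⟨E, hE, ?_⟩
  rw [hEeq, toLin_reindex, sblock_elemdiag, diagonal_submatrix]
  have hDfun : ((fun p : Fin 2 × Fin n => if p = (0, 0) then a else if p = (1, 0) then a⁻¹ else 1)
      ∘ ⇑σ.symm) = fun x => if x = i then a else if x = j then a⁻¹ else 1 := by
    funext x
    simp only [Function.comp_apply]
    by_cases hx : x = i
    · rw [if_pos (by rw [Equiv.symm_apply_eq, hp]; exact hx), if_pos hx]
    · rw [if_neg (by rw [Equiv.symm_apply_eq, hp]; exact hx), if_neg hx]
      by_cases hx2 : x = j
      · rw [if_pos (by rw [Equiv.symm_apply_eq, hq]; exact hx2), if_pos hx2]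
      · rw [if_neg (by rw [Equiv.symm_apply_eq, hq]; exact hx2), if_neg hx2]
  rw [hDfun]

theorem q_one (c : Module.Basis (Fin 2 × Fin n) ℝ V) : QQ c 1 :=
  ⟨1, Subgroup.one_mem _, by rw [Matrix.toLin_one]; rfl⟩

theorem q_diag (c : Module.Basis (Fin 2 × Fin n) ℝ V) (D : Fin 2 × Fin n → ℝ)
    (h0 : ∀ x, D x ≠ 0) (h1 : ∏ x, D x = 1) : QQ c (diagonal D) := by
  suffices H : ∀ (k : ℕ) (D : Fin 2 × Fin n → ℝ),
      (Finset.univ.filter fun x => D x ≠ 1).card = k → (∀ x, D x ≠ 0) → ∏ x, D x = 1 →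
      QQ c (diagonal D) from H _ D rfl h0 h1
  intro k
  induction k using Nat.strong_induction_on with
  | _ k IH =>
    intro D hcard h0 h1
    by_cases hD : ∀ x, D x = 1
    · rw [show D = fun _ => (1:ℝ) from funext hD, Matrix.diagonal_one]
      exact q_one c
    · push_neg at hD
      obtain ⟨i, hi⟩ := hD
      have hex : ∃ j, j ≠ i ∧ D j ≠ 1 := by
        by_contra hcon
        push_neg at hcon
        have : ∏ x, D x = D i :=
          Finset.prod_eq_single i (fun j _ hj => hcon j hj) (by simp)
        exact hi (this.symm.trans h1)
      obtain ⟨j, hji, hj⟩ := hex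
      set D' := Function.update (Function.update D j (D i * D j)) i 1 with hD'def
      have hD'i : D' i = 1 := by simp [hD'def]
      have hD'j : D' j = D i * D j := by
        rw [hD'def, Function.update_of_ne hji, Function.update_self]
      have hD'x : ∀ x, x ≠ i → x ≠ j → D' x = D x := by
        intro x hxi hxj
        rw [hD'def, Function.update_of_ne hxi, Function.update_of_ne hxj]
      have hsplit : diagonal D =
          (diagonal fun x => if x = i then D i else if x = j then (D i)⁻¹ else 1) *
            diagonal D' := by
        rw [Matrix.diagonal_mul_diagonal]
        refine congrArg diagonal (funext fun x => ?_)
        by_cases hx : x = i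
        · rw [if_pos hx, hx, hD'i, mul_one]
        · rw [if_neg hx]
          by_cases hx2 : x = j
          · rw [if_pos hx2, hx2, hD'j]
            exact (inv_mul_cancel_left₀ (h0 i) (D j)).symm
          · rw [if_neg hx2, hD'x x hx hx2, one_mul]
      have h0' : ∀ x, D' x ≠ 0 := by
        intro x
        by_cases hx : x = i
        · rw [hx, hD'i]; exact one_ne_zero
        · by_cases hx2 : x = j
          · rw [hx2, hD'j]; exact mul_ne_zero (h0 i) (h0 j)
          · rw [hD'x x hx hx2]; exact h0 x
      have h1' : ∏ x, D' x = 1 := by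
        have e1 : ∏ x, D' x = 1 * ∏ x ∈ Finset.univ \ {i}, Function.update D j (D i * D j) x :=
          Finset.prod_update_of_mem (Finset.mem_univ i) _ _
        have e2 : ∏ x ∈ Finset.univ \ {i}, Function.update D j (D i * D j) x =
            (D i * D j) * ∏ x ∈ (Finset.univ \ {i}) \ {j}, D x :=
          Finset.prod_update_of_mem (by simp [hji]) _ _
        have e3 : ∏ x, D x = D i * ∏ x ∈ Finset.univ.erase i, D x :=
          (Finset.mul_prod_erase Finset.univ D (Finset.mem_univ i)).symm
        have e4 : ∏ x ∈ Finset.univ.erase i, D x =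
            D j * ∏ x ∈ (Finset.univ.erase i).erase j, D x :=
          (Finset.mul_prod_erase _ D (by simp [hji])).symm
        have hsd : (Finset.univ \ {i}) \ {j} = (Finset.univ.erase i).erase j := by
          simp [Finset.sdiff_singleton_eq_erase]
        rw [e1, e2, hsd, one_mul]
        rw [e3, e4] at h1
        linarith [h1]
      have hlt : (Finset.univ.filter fun x => D' x ≠ 1).card < k := by
        have hss : (Finset.univ.filter fun x => D' x ≠ 1) ⊆
            (Finset.univ.filter fun x => D x ≠ 1).erase i := by
          intro x hx
          rw [Finset.mem_filter] at hx
          rw [Finset.mem_erase, Finset.mem_filter]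
          have hxi : x ≠ i := by
            intro h; rw [h, hD'i] at hx; exact hx.2 rfl
          refine ⟨hxi, Finset.mem_univ x, ?_⟩
          by_cases hx2 : x = j
          · rw [hx2]; exact hj
          · rw [← hD'x x hxi hx2]; exact hx.2
        calc (Finset.univ.filter fun x => D' x ≠ 1).card
            ≤ ((Finset.univ.filter fun x => D x ≠ 1).erase i).card := Finset.card_le_card hss
          _ < (Finset.univ.filter fun x => D x ≠ 1).card :=
              Finset.card_erase_lt_of_mem (by simp [hi])
          _ = k := hcard
      rw [hsplit]
      exact q_mul (q_elemdiag c i j (Ne.symm hji) (D i) (h0 i)) (IH _ hlt D' rfl h0' h1')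

end Main

section Final

variable {V : Type*} [AddCommGroup V] [Module ℝ V]

theorem det_gen [FiniteDimensional ℝ V] {x : V ≃ₗ[ℝ] V} (hx : x ∈ genSet V) :
    LinearMap.det (x : V →ₗ[ℝ] V) = 1 := by
  obtain ⟨I, θ, hI, hxeq⟩ := hx
  set b := Module.finBasis ℝ V with hb
  set M := LinearMap.toMatrix b b I with hM
  have hMM : M * M = -1 := by
    rw [hM, ← LinearMap.toMatrix_comp b b b, hI, map_neg, LinearMap.toMatrix_id]
  have hmat : LinearMap.toMatrix b b (x : V →ₗ[ℝ] V) = rmat M θ := by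
    rw [hxeq, rmat, map_add]
    simp [LinearMap.toMatrix_id, hM]
  calc LinearMap.det (x : V →ₗ[ℝ] V)
      = (LinearMap.toMatrix b b (x : V →ₗ[ℝ] V)).det := (LinearMap.det_toMatrix b _).symm
    _ = 1 := by rw [hmat]; exact det_rmat hMM θ

/-- `SL(V)` as a subgroup of the group of linear automorphisms. -/
def SLsub (V : Type*) [AddCommGroup V] [Module ℝ V] : Subgroup (V ≃ₗ[ℝ] V) where
  carrier := {A : V ≃ₗ[ℝ] V | LinearMap.det (A : V →ₗ[ℝ] V) = 1}
  one_mem' := by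
    show LinearMap.det ((1 : V ≃ₗ[ℝ] V) : V →ₗ[ℝ] V) = 1
    rw [show ((1 : V ≃ₗ[ℝ] V) : V →ₗ[ℝ] V) = LinearMap.id from rfl, LinearMap.det_id]
  mul_mem' := by
    intro a b ha hb
    show LinearMap.det ((a * b : V ≃ₗ[ℝ] V) : V →ₗ[ℝ] V) = 1
    rw [show ((a * b : V ≃ₗ[ℝ] V) : V →ₗ[ℝ] V) = (a : V →ₗ[ℝ] V) ∘ₗ (b : V →ₗ[ℝ] V) from rfl,
      LinearMap.det_comp]
    rw [Set.mem_setOf_eq] at ha hb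
    rw [ha, hb, mul_one]
  inv_mem' := by
    intro a ha
    rw [Set.mem_setOf_eq] at ha ⊢
    have hcomp : ((a⁻¹ : V ≃ₗ[ℝ] V) : V →ₗ[ℝ] V) ∘ₗ (a : V →ₗ[ℝ] V) = LinearMap.id := by
      ext v
      show a.symm (a v) = v
      simp
    have := congrArg LinearMap.det hcomp
    rw [LinearMap.det_comp, ha, mul_one, LinearMap.det_id] at this
    exact this

theorem main_theorem (n : ℕ) (hn : 1 ≤ n) (V : Type*) [AddCommGroup V] [Module ℝ V]
    [FiniteDimensional ℝ V] (hdim : Module.finrank ℝ V = 2 * n) :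
    (Subgroup.closure (genSet V) : Set (V ≃ₗ[ℝ] V)) =
      {A : V ≃ₗ[ℝ] V | LinearMap.det (A : V →ₗ[ℝ] V) = 1} := by
  haveI : NeZero n := ⟨by omega⟩
  apply Set.Subset.antisymm
  · intro A hA
    rw [SetLike.mem_coe] at hA
    have hle : Subgroup.closure (genSet V) ≤ SLsub V := by
      rw [Subgroup.closure_le]
      intro x hx
      exact det_gen hx
    exact hle hA
  · intro A hA
    rw [Set.mem_setOf_eq] at hA
    rw [SetLike.mem_coe]
    set e : Fin (Module.finrank ℝ V) ≃ Fin 2 × Fin n :=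
      (finCongr hdim).trans finProdFinEquiv.symm with he
    set c : Module.Basis (Fin 2 × Fin n) ℝ V := (Module.finBasis ℝ V).reindex e with hc
    set M := LinearMap.toMatrix c c (A : V →ₗ[ℝ] V) with hMdef
    have hMdet : M.det = 1 := by rw [hMdef, LinearMap.det_toMatrix]; exact hA
    have hQ : M.det = 1 ∧ QQ c M := by
      apply Matrix.diagonal_transvection_induction (fun N => N.det = 1 ∧ QQ c N) M
      · intro D hD
        rw [hMdet] at hD
        have hprod : ∏ x, D x = 1 := by rw [← Matrix.det_diagonal]; exact hD
        refine ⟨by rw [Matrix.det_diagonal]; exact hprod, ?_⟩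
        refine q_diag c D ?_ hprod
        intro x
        exact Finset.prod_ne_zero_iff.1 (by rw [hprod]; exact one_ne_zero) x (Finset.mem_univ x)
      · intro t
        refine ⟨t.det, ?_⟩
        rw [show t.toMatrix = transvection t.i t.j t.c from rfl]
        exact q_transvection c t.i t.j t.hij t.c
      · intro N₁ N₂ h1 h2
        exact ⟨by rw [Matrix.det_mul, h1.1, h2.1, mul_one], q_mul h1.2 h2.2⟩
    obtain ⟨E, hE, hEeq⟩ := hQ.2
    have hEA : E = A := by
      apply LinearEquiv.toLinearMap_injective
      rw [hEeq, hMdef, Matrix.toLin_toMatrix]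
    exact hEA ▸ hE

end Final

end Stmt3Aux

/-- the subgroup of `GL(V)` generated by the operators
`ρ_I(θ) = cos θ · id + sin θ · I`, for `I` a complex structure on `V` and `θ ∈ ℝ`,
is exactly `SL(V)`, the group of automorphisms of determinant `1`. -/
theorem stmt3 (n : ℕ) (hn : 1 ≤ n) (V : Type*) [AddCommGroup V] [Module ℝ V]
    [FiniteDimensional ℝ V] (hdim : Module.finrank ℝ V = 2 * n) :
    (Subgroup.closure {A : V ≃ₗ[ℝ] V | ∃ (I : Module.End ℝ V) (θ : ℝ),
        I ∘ₗ I = -LinearMap.id ∧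
        (A : V →ₗ[ℝ] V) = Real.cos θ • LinearMap.id + Real.sin θ • I} :
      Set (V ≃ₗ[ℝ] V)) =
    {A : V ≃ₗ[ℝ] V | LinearMap.det (A : V →ₗ[ℝ] V) = 1} := by
  exact Stmt3Aux.main_theorem n hn V hdim
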